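/- In a weighted hypergraph with maximum hyperedge size d, if M is a maximal matching such that every hyperedge f not in M that intersects no edge of M does not exist (maximality), and additionally every hyperedge f outside M intersects some edge e of M with ω(e) > ω(f) (the local-max property), then the weight of M is at least 1/d times the weight of any matching M' of H, i.e., d·ω(M) ≥ ω(M'). -/

import Mathlib

/-- The 1/d approximation guarantee for maximal matchings with the local-max
property in weighted hypergraphs. -/
theorem localmax_approx_guarantee {V : Type*} [DecidableEq V]
    (E : Finset (Finset V)) (ω : Finset V → ℝ) (d : ℕ) (hd1 : 1 ≤ d)
    (hω : ∀ e ∈ E, 0 < ω e) (hsize : ∀ e ∈ E, e.card ≤ d)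
    (M : Finset (Finset V)) (hME : M ⊆ E)
    (hMdisj : ∀ e₁ ∈ M, ∀ e₂ ∈ M, e₁ ≠ e₂ → Disjoint e₁ e₂)
    (hmaximal : ∀ f ∈ E, f ∉ M → ∃ e ∈ M, (e ∩ f).Nonempty)
    (hlocalmax : ∀ f ∈ E, f ∉ M → ∃ e ∈ M, (e ∩ f).Nonempty ∧ ω f < ω e)
    (M' : Finset (Finset V)) (hM'E : M' ⊆ E)
    (hM'disj : ∀ e₁ ∈ M', ∀ e₂ ∈ M', e₁ ≠ e₂ → Disjoint e₁ e₂) :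
    (∑ f ∈ M', ω f) ≤ (d : ℝ) * ∑ e ∈ M, ω e := by
  classical
  -- choose a charging function c : every f ∈ M' is charged to some e ∈ M with ω f ≤ ω e
  have key : ∀ f, ∃ e, f ∈ M' → e ∈ M ∧ ((e ∩ f).Nonempty ∨ f = e) ∧ ω f ≤ ω e := by
    intro f
    by_cases hf : f ∈ M'
    · by_cases hfM : f ∈ M
      · exact ⟨f, fun _ => ⟨hfM, Or.inr rfl, le_refl _⟩⟩
      · obtain ⟨e, he, hne, hlt⟩ := hlocalmax f (hM'E hf) hfM
        exact ⟨e, fun _ => ⟨he, Or.inl hne, hlt.le⟩⟩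
    · exact ⟨∅, fun h => absurd h hf⟩
  choose c hc using key
  have hmaps : ∀ f ∈ M', c f ∈ M := fun f hf => (hc f hf).1
  -- regroup the sum over M' by fibers of c
  rw [← Finset.sum_fiberwise_of_maps_to hmaps ω, Finset.mul_sum]
  apply Finset.sum_le_sum
  intro e he
  set fiber := M'.filter (fun f => c f = e) with hfib
  have hωe : 0 < ω e := hω e (hME he)
  -- each fiber has at most d elements
  have hcard : fiber.card ≤ d := by
    by_cases hene : e.Nonempty
    · -- inject the fiber into e by picking a vertex in e ∩ f
      have hint : ∀ f ∈ fiber, (e ∩ f).Nonempty := by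
        intro f hf
        rw [hfib, Finset.mem_filter] at hf
        obtain ⟨hfM', hcf⟩ := hf
        rcases (hc f hfM').2.1 with h | h
        · rwa [hcf] at h
        · rw [hcf] at h
          subst h
          simpa using hene
      calc fiber.card ≤ e.card := by
            apply Finset.card_le_card_of_injOn
              (fun f => if h : (e ∩ f).Nonempty then h.choose else hene.choose)
            · intro f hf
              dsimp only
              rw [dif_pos (hint f hf)]
              exact Finset.mem_inter.mp (hint f hf).choose_spec |>.1
            · intro f₁ hf₁ f₂ hf₂ heq
              simp only [dif_pos (hint f₁ hf₁), dif_pos (hint f₂ hf₂)] at heq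
              by_contra hne
              have hv₁ := Finset.mem_inter.mp (hint f₁ hf₁).choose_spec |>.2
              have hv₂ := Finset.mem_inter.mp (hint f₂ hf₂).choose_spec |>.2
              rw [heq] at hv₁
              have hM'₁ := (Finset.mem_filter.mp hf₁).1
              have hM'₂ := (Finset.mem_filter.mp hf₂).1
              exact Finset.disjoint_left.mp (hM'disj f₁ hM'₁ f₂ hM'₂ hne) hv₁ hv₂
        _ ≤ d := hsize e (hME he)
    · -- e = ∅ : fiber ⊆ {∅}
      rw [Finset.not_nonempty_iff_eq_empty] at hene
      have : fiber ⊆ {∅} := by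
        intro f hf
        rw [hfib, Finset.mem_filter] at hf
        obtain ⟨hfM', hcf⟩ := hf
        rcases (hc f hfM').2.1 with h | h
        · rw [hcf, hene] at h
          simp at h
        · rw [hcf, hene] at h
          simp [h]
      calc fiber.card ≤ ({∅} : Finset (Finset V)).card := Finset.card_le_card this
        _ = 1 := Finset.card_singleton _
        _ ≤ d := hd1
  -- bound the fiber sum
  have hle : ∀ f ∈ fiber, ω f ≤ ω e := by
    intro f hf
    rw [hfib, Finset.mem_filter] at hf
    obtain ⟨hfM', hcf⟩ := hf
    have := (hc f hfM').2.2
    rwa [hcf] at this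
  calc ∑ f ∈ fiber, ω f ≤ ∑ _f ∈ fiber, ω e := Finset.sum_le_sum hle
    _ = fiber.card * ω e := by rw [Finset.sum_const, nsmul_eq_mul]
    _ ≤ (d : ℝ) * ω e := by
        apply mul_le_mul_of_nonneg_right _ hωe.le
        exact_mod_cast hcard
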